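/- Let c1, c2, g, m > 0 and T > 0. For any continuously differentiable velocity trajectory v : [0,T] → ℝ² with v(t) ≠ 0 for all t, the propulsion energy E(v) = ∫₀ᵀ [c1‖v(t)‖³ + (c2/‖v(t)‖)(1 + (‖v'(t)‖² − (⟨v'(t),v(t)⟩)²/‖v(t)‖²)/g²)] dt satisfies E(v) ≥ T·(3^(-3/4) + 3^(1/4))·c1^(1/4)·c2^(3/4), with equality achieved by the constant trajectory v(t) = (c2/(3c1))^(1/4)·u for any fixed unit vector u. -/

import Mathlib

open Real MeasureTheory intervalIntegral
open scoped RealInnerProductSpace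


lemma eqmin (c1 c2 : ℝ) (hc1 : 0 < c1) (hc2 : 0 < c2) :
    c1 * ((c2/(3*c1)) ^ ((1:ℝ)/4)) ^ 3 + c2 / ((c2/(3*c1)) ^ ((1:ℝ)/4))
      = ((3:ℝ) ^ (-(3:ℝ)/4) + (3:ℝ) ^ ((1:ℝ)/4)) * c1 ^ ((1:ℝ)/4) * c2 ^ ((3:ℝ)/4) := by
  have hx : (0:ℝ) < c2/(3*c1) := by positivity
  rw [← Real.rpow_natCast ((c2/(3*c1)) ^ ((1:ℝ)/4)) 3, ← Real.rpow_mul hx.le,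
    Real.div_rpow hc2.le (by positivity), Real.div_rpow hc2.le (by positivity),
    Real.mul_rpow (by norm_num) hc1.le, Real.mul_rpow (by norm_num) hc1.le]
  push_cast
  norm_num
  rw [Real.rpow_neg (by norm_num : (0:ℝ) ≤ 3)]
  have h1 : c1 ^ ((3:ℝ)/4) ≠ 0 := by positivity
  have h2 : c2 ^ ((1:ℝ)/4) ≠ 0 := by positivity
  have h3 : (3:ℝ) ^ ((3:ℝ)/4) ≠ 0 := by positivity
  field_simp
  have A : c1 ^ ((1:ℝ)/4) * c1 ^ ((3:ℝ)/4) = c1 := by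
    rw [← Real.rpow_add hc1]; norm_num
  have X : c2 ^ ((3:ℝ)/4) * c2 ^ ((1:ℝ)/4) = c2 := by
    rw [← Real.rpow_add hc2]; norm_num
  have Tt : (3:ℝ) ^ ((1:ℝ)/4) * (3:ℝ) ^ ((3:ℝ)/4) = 3 := by
    rw [← Real.rpow_add (by norm_num : (0:ℝ)<3)]; norm_num
  set a14 := c1 ^ ((1:ℝ)/4); set a34 := c1 ^ ((3:ℝ)/4)
  set x14 := c2 ^ ((1:ℝ)/4); set x34 := c2 ^ ((3:ℝ)/4)
  set t14 := (3:ℝ) ^ ((1:ℝ)/4); set t34 := (3:ℝ) ^ ((3:ℝ)/4)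
  linear_combination (-3*c1)*X + (3*c2 - 4*x34*x14)*A + (c2*a14*a34 - x34*x14*a14*a34)*Tt


lemma lower (c1 c2 V : ℝ) (hc1 : 0 < c1) (hc2 : 0 < c2) (hV : 0 < V) :
    ((3:ℝ) ^ (-(3:ℝ)/4) + (3:ℝ) ^ ((1:ℝ)/4)) * c1 ^ ((1:ℝ)/4) * c2 ^ ((3:ℝ)/4)
      ≤ c1 * V ^ 3 + c2 / V := by
  set W := (c2/(3*c1)) ^ ((1:ℝ)/4) with hWdef
  have hW : 0 < W := Real.rpow_pos_of_pos (by positivity) _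
  have hW4 : W ^ 4 = c2 / (3 * c1) := by
    rw [hWdef, ← Real.rpow_natCast (_ ^ _) 4, ← Real.rpow_mul (by positivity)]
    norm_num
  have hc2W : c2 = 3 * c1 * W ^ 4 := by rw [hW4]; field_simp
  rw [← eqmin c1 c2 hc1 hc2]
  rw [← sub_nonneg]
  have e : c1 * V ^ 3 + c2 / V - (c1 * W ^ 3 + c2 / W)
      = (c1 / V) * (V - W) ^ 2 * (V ^ 2 + 2 * V * W + 3 * W ^ 2) := by
    rw [hc2W]; field_simp; ring
  rw [e]
  have h2 : 0 ≤ V ^ 2 + 2 * V * W + 3 * W ^ 2 := by positivity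
  positivity

theorem stmt_13 (c1 c2 g m T : ℝ) (hc1 : 0 < c1) (hc2 : 0 < c2) (hg : 0 < g)
    (hm : 0 < m) (hT : 0 < T) :
    (∀ v : ℝ → EuclideanSpace ℝ (Fin 2), ContDiff ℝ 1 v → (∀ t, v t ≠ 0) →
      T * (((3:ℝ) ^ (-(3:ℝ)/4) + (3:ℝ) ^ ((1:ℝ)/4)) * c1 ^ ((1:ℝ)/4) * c2 ^ ((3:ℝ)/4))
        ≤ ∫ t in (0:ℝ)..T,
            (c1 * ‖v t‖ ^ 3
              + (c2 / ‖v t‖)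
                * (1 + (‖deriv v t‖ ^ 2 - ⟪deriv v t, v t⟫ ^ 2 / ‖v t‖ ^ 2) / g ^ 2))) ∧
    (∀ u : EuclideanSpace ℝ (Fin 2), ‖u‖ = 1 →
      (∫ t in (0:ℝ)..T,
          (c1 * ‖(fun _ : ℝ => ((c2 / (3 * c1)) ^ ((1:ℝ)/4) : ℝ) • u) t‖ ^ 3
            + (c2 / ‖(fun _ : ℝ => ((c2 / (3 * c1)) ^ ((1:ℝ)/4) : ℝ) • u) t‖)
              * (1 + (‖deriv (fun _ : ℝ => ((c2 / (3 * c1)) ^ ((1:ℝ)/4) : ℝ) • u) t‖ ^ 2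
                  - ⟪deriv (fun _ : ℝ => ((c2 / (3 * c1)) ^ ((1:ℝ)/4) : ℝ) • u) t,
                      (fun _ : ℝ => ((c2 / (3 * c1)) ^ ((1:ℝ)/4) : ℝ) • u) t⟫ ^ 2
                    / ‖(fun _ : ℝ => ((c2 / (3 * c1)) ^ ((1:ℝ)/4) : ℝ) • u) t‖ ^ 2) / g ^ 2)))
        = T * (((3:ℝ) ^ (-(3:ℝ)/4) + (3:ℝ) ^ ((1:ℝ)/4)) * c1 ^ ((1:ℝ)/4) * c2 ^ ((3:ℝ)/4))) := by
  set K := ((3:ℝ) ^ (-(3:ℝ)/4) + (3:ℝ) ^ ((1:ℝ)/4)) * c1 ^ ((1:ℝ)/4) * c2 ^ ((3:ℝ)/4) with hK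
  constructor
  · intro v hv hne
    have h0 : ∀ t, ‖v t‖ ≠ 0 := fun t => norm_ne_zero_iff.2 (hne t)
    have hvc : Continuous v := hv.continuous
    have hv' : Continuous (deriv v) := hv.continuous_deriv le_rfl
    have hcont : Continuous (fun t => c1 * ‖v t‖ ^ 3
        + (c2 / ‖v t‖) * (1 + (‖deriv v t‖ ^ 2 - ⟪deriv v t, v t⟫ ^ 2 / ‖v t‖ ^ 2) / g ^ 2)) := by
      apply Continuous.add
      · exact continuous_const.mul (hvc.norm.pow 3)
      · apply Continuous.mul
        · exact continuous_const.div hvc.norm h0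
        · apply continuous_const.add
          apply Continuous.div_const
          exact (hv'.norm.pow 2).sub
            (((hv'.inner hvc).pow 2).div (hvc.norm.pow 2) (fun t => pow_ne_zero 2 (h0 t)))
    have hpt : ∀ t ∈ Set.Icc (0:ℝ) T, K ≤ c1 * ‖v t‖ ^ 3
        + (c2 / ‖v t‖) * (1 + (‖deriv v t‖ ^ 2 - ⟪deriv v t, v t⟫ ^ 2 / ‖v t‖ ^ 2) / g ^ 2) := by
      intro t _
      have hVpos : 0 < ‖v t‖ := norm_pos_iff.2 (hne t)
      have hCS : ⟪deriv v t, v t⟫ ^ 2 / ‖v t‖ ^ 2 ≤ ‖deriv v t‖ ^ 2 := by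
        rw [div_le_iff₀ (by positivity)]
        have := abs_real_inner_le_norm (deriv v t) (v t)
        calc ⟪deriv v t, v t⟫ ^ 2 = |⟪deriv v t, v t⟫| ^ 2 := (sq_abs _).symm
          _ ≤ (‖deriv v t‖ * ‖v t‖) ^ 2 := by
              exact pow_le_pow_left₀ (abs_nonneg _) this 2
          _ = ‖deriv v t‖ ^ 2 * ‖v t‖ ^ 2 := by ring
      have hextra : (0:ℝ) ≤ (‖deriv v t‖ ^ 2 - ⟪deriv v t, v t⟫ ^ 2 / ‖v t‖ ^ 2) / g ^ 2 := by
        apply div_nonneg (by linarith) (by positivity)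
      have h2 : c2 / ‖v t‖ ≤ (c2 / ‖v t‖)
          * (1 + (‖deriv v t‖ ^ 2 - ⟪deriv v t, v t⟫ ^ 2 / ‖v t‖ ^ 2) / g ^ 2) := by
        nlinarith [div_pos hc2 hVpos]
      have := lower c1 c2 (‖v t‖) hc1 hc2 hVpos
      rw [← hK] at this
      linarith
    calc T * K = ∫ _ in (0:ℝ)..T, K := by
          rw [intervalIntegral.integral_const, smul_eq_mul, sub_zero]
      _ ≤ _ := by
          apply intervalIntegral.integral_mono_on hT.le
            (intervalIntegrable_const) (hcont.intervalIntegrable 0 T) hpt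
  · intro u hu
    set V := (c2 / (3*c1)) ^ ((1:ℝ)/4) with hV
    have hVpos : 0 < V := Real.rpow_pos_of_pos (by positivity) _
    have hd : deriv (fun _ : ℝ => V • u) = fun _ => 0 := by
      funext t; exact deriv_const t _
    have hnorm : ‖V • u‖ = V := by
      rw [norm_smul, Real.norm_eq_abs, abs_of_pos hVpos, hu, mul_one]
    have hint : ∀ t : ℝ, c1 * ‖(fun _ : ℝ => V • u) t‖ ^ 3
        + (c2 / ‖(fun _ : ℝ => V • u) t‖)
          * (1 + (‖deriv (fun _ : ℝ => V • u) t‖ ^ 2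
              - ⟪deriv (fun _ : ℝ => V • u) t, (fun _ : ℝ => V • u) t⟫ ^ 2
                / ‖(fun _ : ℝ => V • u) t‖ ^ 2) / g ^ 2)
        = c1 * V ^ 3 + c2 / V := by
      intro t
      simp [hd, hnorm]
    rw [intervalIntegral.integral_congr (g := fun _ => c1 * V ^ 3 + c2 / V)
      (fun t _ => hint t)]
    rw [intervalIntegral.integral_const, smul_eq_mul, sub_zero, hK, ← eqmin c1 c2 hc1 hc2]
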